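/- Let G be the group with generators α_1,…,α_n and relations α_p α_q α_p^{-1} = α_q^{ε(p,q)} for p < q, where ε(p,q) = 1 if c_{p,q} = 0 and ε(p,q) = -1 if c_{p,q} = 1. Then G is solvable of derived length at most 2, i.e. the commutator subgroup [G,G] is abelian. -/

import Mathlib

/-- Relators for the fundamental group of the real Bott tower: for `p < q`,
`α_p α_q α_p⁻¹ α_q^{-ε(p,q)}`, encoding `α_p α_q α_p⁻¹ = α_q^{ε(p,q)}` with
`ε(p,q) = 1` if `c p q = 0` and `ε(p,q) = -1` if `c p q = 1`. -/
def bottRels (n : ℕ) (c : Fin n → Fin n → ZMod 2) : Set (FreeGroup (Fin n)) :=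
  {w | ∃ p q : Fin n, p < q ∧
    w = (if c p q = 0 then
          FreeGroup.of p * FreeGroup.of q * (FreeGroup.of p)⁻¹ * (FreeGroup.of q)⁻¹
        else
          FreeGroup.of p * FreeGroup.of q * (FreeGroup.of p)⁻¹ * FreeGroup.of q)}

namespace Stmt16Aux

open scoped commutatorElement

/-- If conjugation by `u` sends `s` to `t`, conjugation by `u⁻¹` sends `t` to `s`. -/
theorem conj_swap {Γ : Type*} [Group Γ] {u s t : Γ} (h : u * s * u⁻¹ = t) :
    u⁻¹ * t * u = s := by
  rw [← h]; group

/-- If conjugation by `u` inverts `s`, so does conjugation by `u⁻¹`. -/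
theorem conj_inv_swap {Γ : Type*} [Group Γ] {u s : Γ} (h : u * s * u⁻¹ = s⁻¹) :
    u⁻¹ * s * u = s⁻¹ := by
  have h1 : u⁻¹ * s⁻¹ * u = s := conj_swap h
  calc u⁻¹ * s * u = (u⁻¹ * s⁻¹ * u)⁻¹ := by group
    _ = s⁻¹ := by rw [h1]

/-- If conjugation by `u` inverts `s`, then conjugation by `u` sends `s⁻¹` to `s`. -/
theorem conj_inv_inv {Γ : Type*} [Group Γ] {u s : Γ} (h : u * s * u⁻¹ = s⁻¹) :
    u * s⁻¹ * u⁻¹ = s := by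
  calc u * s⁻¹ * u⁻¹ = (u * s * u⁻¹)⁻¹ := by group
    _ = (s⁻¹)⁻¹ := by rw [h]
    _ = s := inv_inv _

variable {n : ℕ} {c : Fin n → Fin n → ZMod 2}

local notation "G" => PresentedGroup (bottRels n c)

local notation "a" => (PresentedGroup.of : Fin n → PresentedGroup (bottRels n c))

/-- The defining relations hold in the presented group. -/
theorem rel (p q : Fin n) (h : p < q) :
    a p * a q * (a p)⁻¹ = (if c p q = 0 then (a q : G) else (a q)⁻¹) := by
  by_cases hc : c p q = 0
  · rw [if_pos hc]
    have hr : FreeGroup.of p * FreeGroup.of q * (FreeGroup.of p)⁻¹ * (FreeGroup.of q)⁻¹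
        ∈ bottRels n c := ⟨p, q, h, by rw [if_pos hc]⟩
    have h1 : PresentedGroup.mk (bottRels n c)
        (FreeGroup.of p * FreeGroup.of q * (FreeGroup.of p)⁻¹ * (FreeGroup.of q)⁻¹) = 1 :=
      (QuotientGroup.eq_one_iff _).mpr (Subgroup.subset_normalClosure hr)
    simp only [map_mul, map_inv] at h1
    change a p * a q * (a p)⁻¹ * (a q)⁻¹ = 1 at h1
    exact mul_inv_eq_one.mp h1
  · rw [if_neg hc]
    have hr : FreeGroup.of p * FreeGroup.of q * (FreeGroup.of p)⁻¹ * FreeGroup.of q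
        ∈ bottRels n c := ⟨p, q, h, by rw [if_neg hc]⟩
    have h1 : PresentedGroup.mk (bottRels n c)
        (FreeGroup.of p * FreeGroup.of q * (FreeGroup.of p)⁻¹ * FreeGroup.of q) = 1 :=
      (QuotientGroup.eq_one_iff _).mpr (Subgroup.subset_normalClosure hr)
    simp only [map_mul, map_inv] at h1
    change a p * a q * (a p)⁻¹ * a q = 1 at h1
    rw [eq_inv_iff_mul_eq_one]
    exact h1

/-- conjugation of a square of a generator by a generator gives the square or its inverse -/
theorem conj_sq (p q : Fin n) :
    a p * (a q) ^ 2 * (a p)⁻¹ = (a q) ^ 2 ∨ a p * (a q) ^ 2 * (a p)⁻¹ = ((a q) ^ 2)⁻¹ := by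
  rcases lt_trichotomy p q with hpq | rfl | hqp
  · have h := rel (c := c) p q hpq
    by_cases hc : c p q = 0
    · left
      rw [if_pos hc] at h
      have h2 : a p * (a q * a q) * (a p)⁻¹
          = (a p * a q * (a p)⁻¹) * (a p * a q * (a p)⁻¹) := by group
      rw [pow_two, h2, h]
    · right
      rw [if_neg hc] at h
      have h2 : a p * (a q * a q) * (a p)⁻¹
          = (a p * a q * (a p)⁻¹) * (a p * a q * (a p)⁻¹) := by group
      rw [pow_two, h2, h, mul_inv_rev]
  · left; group
  · have h := rel (c := c) q p hqp
    by_cases hc : c q p = 0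
    · left
      rw [if_pos hc] at h
      have hcomm : Commute (a p) (a q) := by
        have h2 := h
        rw [mul_inv_eq_iff_eq_mul] at h2
        exact Commute.symm h2
      have h2 : Commute (a p) ((a q) ^ 2) := hcomm.pow_right 2
      rw [mul_inv_eq_iff_eq_mul, h2.eq]
    · left
      rw [if_neg hc] at h
      -- h : a q * a p * (a q)⁻¹ = (a p)⁻¹
      have hx : a q * (a p)⁻¹ * (a q)⁻¹ = a p := conj_inv_inv h
      have h2 : a q * (a p)⁻¹ = a p * a q := by
        rw [mul_inv_eq_iff_eq_mul] at hx; exact hx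
      have key : a p * (a q * a q) * (a p)⁻¹ = a q * a q := by
        calc a p * (a q * a q) * (a p)⁻¹
            = (a p * a q) * (a q * (a p)⁻¹) := by group
          _ = (a p * a q) * (a p * a q) := by rw [h2]
          _ = (a q * (a p)⁻¹) * (a p * a q) := by rw [h2]
          _ = a q * a q := by group
      rw [pow_two]
      exact key

/-- the set of squares of generators -/
def S : Set G := Set.range (fun q : Fin n => (a q) ^ 2)

/-- the subgroup generated by the squares -/
def A : Subgroup G := Subgroup.closure (S (n := n) (c := c))

theorem sq_mem_A (q : Fin n) : (a q) ^ 2 ∈ (A : Subgroup G) :=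
  Subgroup.subset_closure ⟨q, rfl⟩

theorem conj_mem_A (p : Fin n) {x : G} (hx : x ∈ (A : Subgroup G)) :
    a p * x * (a p)⁻¹ ∈ (A : Subgroup G) := by
  induction hx using Subgroup.closure_induction with
  | mem z hz =>
    obtain ⟨q, rfl⟩ := hz
    rcases conj_sq (c := c) p q with h | h <;> rw [h]
    · exact sq_mem_A q
    · exact Subgroup.inv_mem _ (sq_mem_A q)
  | one => simpa using Subgroup.one_mem _
  | mul x y _ _ hx hy =>
    have h2 : a p * (x * y) * (a p)⁻¹ = (a p * x * (a p)⁻¹) * (a p * y * (a p)⁻¹) := by group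
    rw [h2]; exact Subgroup.mul_mem _ hx hy
  | inv x _ hx =>
    have h2 : a p * x⁻¹ * (a p)⁻¹ = (a p * x * (a p)⁻¹)⁻¹ := by group
    rw [h2]; exact Subgroup.inv_mem _ hx

theorem conj_inv_mem_A (p : Fin n) {x : G} (hx : x ∈ (A : Subgroup G)) :
    (a p)⁻¹ * x * a p ∈ (A : Subgroup G) := by
  induction hx using Subgroup.closure_induction with
  | mem z hz =>
    obtain ⟨q, rfl⟩ := hz
    rcases conj_sq (c := c) p q with h | h
    · rw [conj_swap h]
      exact sq_mem_A q
    · rw [conj_inv_swap h]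
      exact Subgroup.inv_mem _ (sq_mem_A q)
  | one => simpa using Subgroup.one_mem _
  | mul x y _ _ hx hy =>
    have h2 : (a p)⁻¹ * (x * y) * a p = ((a p)⁻¹ * x * a p) * ((a p)⁻¹ * y * a p) := by group
    rw [h2]; exact Subgroup.mul_mem _ hx hy
  | inv x _ hx =>
    have h2 : (a p)⁻¹ * x⁻¹ * a p = ((a p)⁻¹ * x * a p)⁻¹ := by group
    rw [h2]; exact Subgroup.inv_mem _ hx

instance A_normal : (A : Subgroup G).Normal := by
  rw [← Subgroup.normalizer_eq_top_iff, eq_top_iff]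
  intro g _
  refine PresentedGroup.generated_by _ _ (fun p => ?_) g
  rw [Subgroup.mem_normalizer_iff]
  intro h
  constructor
  · exact fun hh => conj_mem_A p hh
  · intro hh
    have h2 : h = (a p)⁻¹ * (a p * h * (a p)⁻¹) * a p := by group
    rw [h2]
    exact conj_inv_mem_A p hh

theorem comm_gen_mem_A (p q : Fin n) : ⁅(a p : G), a q⁆ ∈ (A : Subgroup G) := by
  rcases lt_trichotomy p q with hpq | rfl | hqp
  · have h := rel (c := c) p q hpq
    by_cases hc : c p q = 0
    · rw [if_pos hc] at h
      have h2 : ⁅(a p : G), a q⁆ = 1 := by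
        rw [commutatorElement_def, h]; group
      rw [h2]; exact Subgroup.one_mem _
    · rw [if_neg hc] at h
      have h2 : ⁅(a p : G), a q⁆ = ((a q) ^ 2)⁻¹ := by
        rw [commutatorElement_def, h]; group
      rw [h2]; exact Subgroup.inv_mem _ (sq_mem_A q)
  · rw [commutatorElement_self]; exact Subgroup.one_mem _
  · have h := rel (c := c) q p hqp
    by_cases hc : c q p = 0
    · rw [if_pos hc] at h
      have hcomm : Commute (a p) (a q) := by
        rw [mul_inv_eq_iff_eq_mul] at h
        exact Commute.symm h
      rw [hcomm.commutator_eq]; exact Subgroup.one_mem _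
    · rw [if_neg hc] at h
      -- h : a q * a p * (a q)⁻¹ = (a p)⁻¹, so ⁅a p, a q⁆ = (a p)^2
      have hx : a q * (a p)⁻¹ * (a q)⁻¹ = a p := conj_inv_inv h
      have h2 : a q * (a p)⁻¹ = a p * a q := by
        rw [mul_inv_eq_iff_eq_mul] at hx; exact hx
      have h3 : ⁅(a p : G), a q⁆ = (a p) ^ 2 := by
        rw [commutatorElement_def]
        calc a p * a q * (a p)⁻¹ * (a q)⁻¹
            = a p * (a q * (a p)⁻¹) * (a q)⁻¹ := by group
          _ = a p * (a p * a q) * (a q)⁻¹ := by rw [h2]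
          _ = a p * a p := by group
          _ = (a p) ^ 2 := (pow_two _).symm
      rw [h3]; exact sq_mem_A p

theorem comm_mem_A (g h : G) : ⁅g, h⁆ ∈ (A : Subgroup G) := by
  have hA : (A : Subgroup G).Normal := A_normal
  have hgen : ∀ p : Fin n, ∀ z : G, Commute ((QuotientGroup.mk' (A : Subgroup G)) (a p)) ((QuotientGroup.mk' (A : Subgroup G)) z) := by
    intro p z
    have hz : z ∈ (Subgroup.centralizer {(QuotientGroup.mk' (A : Subgroup G)) (a p)}).comap (QuotientGroup.mk' (A : Subgroup G)) := by
      refine PresentedGroup.generated_by _ _ (fun q => ?_) z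
      simp only [Subgroup.mem_comap, Subgroup.mem_centralizer_iff]
      rintro w rfl
      have hcomm : ⁅(a p : G), a q⁆ ∈ (A : Subgroup G) := comm_gen_mem_A p q
      rw [← QuotientGroup.ker_mk' (A : Subgroup G), MonoidHom.mem_ker,
        map_commutatorElement] at hcomm
      exact (commutatorElement_eq_one_iff_commute.mp hcomm).eq
    rw [Subgroup.mem_comap, Subgroup.mem_centralizer_iff] at hz
    exact hz ((QuotientGroup.mk' (A : Subgroup G)) (a p)) rfl
  have hcommQ : ∀ z w : G, Commute ((QuotientGroup.mk' (A : Subgroup G)) z) ((QuotientGroup.mk' (A : Subgroup G)) w) := by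
    intro z w
    have hz : z ∈ (Subgroup.centralizer {(QuotientGroup.mk' (A : Subgroup G)) w}).comap (QuotientGroup.mk' (A : Subgroup G)) := by
      refine PresentedGroup.generated_by _ _ (fun p => ?_) z
      simp only [Subgroup.mem_comap, Subgroup.mem_centralizer_iff]
      rintro u rfl
      exact (hgen p w).symm.eq
    rw [Subgroup.mem_comap, Subgroup.mem_centralizer_iff] at hz
    exact Commute.symm (hz ((QuotientGroup.mk' (A : Subgroup G)) w) rfl)
  have h1 : (QuotientGroup.mk' (A : Subgroup G)) ⁅g, h⁆ = 1 := by
    rw [map_commutatorElement]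
    exact (hcommQ g h).commutator_eq
  rw [← QuotientGroup.ker_mk' (A : Subgroup G)]
  exact h1

theorem sq_commute (p q : Fin n) : Commute ((a p : G) ^ 2) ((a q) ^ 2) := by
  rcases conj_sq (c := c) p q with h | h
  · have h2 : Commute (a p) ((a q) ^ 2) := by
      rw [mul_inv_eq_iff_eq_mul] at h
      exact h
    exact h2.pow_left 2
  · -- conj by a p inverts (a q)^2, so conj by (a p)^2 fixes it
    have h1 : a p * ((a q) ^ 2)⁻¹ * (a p)⁻¹ = (a q) ^ 2 := conj_inv_inv h
    have key : (a p * a p) * ((a q) ^ 2) * (a p * a p)⁻¹ = (a q) ^ 2 := by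
      calc (a p * a p) * ((a q) ^ 2) * (a p * a p)⁻¹
          = a p * (a p * (a q) ^ 2 * (a p)⁻¹) * (a p)⁻¹ := by group
        _ = a p * ((a q) ^ 2)⁻¹ * (a p)⁻¹ := by rw [h]
        _ = (a q) ^ 2 := h1
    rw [mul_inv_eq_iff_eq_mul, ← pow_two] at key
    exact key

theorem A_abelian {x y : G} (hx : x ∈ (A : Subgroup G)) (hy : y ∈ (A : Subgroup G)) :
    x * y = y * x := by
  refine Subgroup.closure_induction₂
    (p := fun x y _ _ => Commute x y) ?_ ?_ ?_ ?_ ?_ ?_ ?_ hx hy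
  · rintro _ _ ⟨p, rfl⟩ ⟨q, rfl⟩
    exact sq_commute p q
  · intro x _; exact Commute.one_left x
  · intro x _; exact Commute.one_right x
  · intro x y z _ _ _ h1 h2; exact h1.mul_left h2
  · intro y z x _ _ _ h1 h2; exact h1.mul_right h2
  · intro x y _ _ h1; exact h1.inv_left
  · intro x y _ _ h1; exact h1.inv_right

end Stmt16Aux

/-- The fundamental group of a real Bott tower is solvable of derived length at
most 2: its commutator subgroup is abelian. -/
theorem stmt_16 (n : ℕ) (c : Fin n → Fin n → ZMod 2)
    (x y : PresentedGroup (bottRels n c))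
    (hx : x ∈ commutator (PresentedGroup (bottRels n c)))
    (hy : y ∈ commutator (PresentedGroup (bottRels n c))) :
    x * y = y * x := by
  have hle : commutator (PresentedGroup (bottRels n c)) ≤ Stmt16Aux.A := by
    rw [commutator_def, Subgroup.commutator_le]
    intro g _ h _
    exact Stmt16Aux.comm_mem_A g h
  exact Stmt16Aux.A_abelian (hle hx) (hle hy)
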